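/- Integration-by-parts identity: for u ∈ H¹₀((ρ₁, ρ₂), ℂ) and m ∈ ℝ, ∫_{ρ₁}^{ρ₂} |(∂_r − (m+1/2)/r) u|² dr = ∫_{ρ₁}^{ρ₂} |(∂_r − 1/(2r)) u|² dr + ∫_{ρ₁}^{ρ₂} |m u / r|² dr. -/

import Mathlib

open Real Set

lemma norm_sub_real_mul_sq (c : ℝ) (a b : ℂ) :
    ‖a - (c : ℂ) * b‖ ^ 2 = (a.re - c * b.re) ^ 2 + (a.im - c * b.im) ^ 2 := by
  rw [Complex.sq_norm, Complex.normSq_apply]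
  simp [Complex.sub_re, Complex.sub_im, Complex.mul_re, Complex.mul_im]
  ring

lemma norm_real_mul_sq (c : ℝ) (b : ℂ) :
    ‖(c : ℂ) * b‖ ^ 2 = (c * b.re) ^ 2 + (c * b.im) ^ 2 := by
  rw [Complex.sq_norm, Complex.normSq_apply]
  simp [Complex.mul_re, Complex.mul_im]
  ring

/-- Integration-by-parts identity: for u ∈ H¹₀((ρ₁, ρ₂), ℂ) and m ∈ ℝ,
∫|(∂_r − (m+1/2)/r)u|² = ∫|(∂_r − 1/(2r))u|² + ∫|m u/r|². -/
theorem stmt17 (ρ₁ ρ₂ : ℝ) (hρ₁ : 0 < ρ₁) (hρ : ρ₁ < ρ₂) (m : ℝ)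
    (u : ℝ → ℂ) (hu : ContDiff ℝ 1 u) (hu₁ : u ρ₁ = 0) (hu₂ : u ρ₂ = 0) :
    (∫ r in ρ₁..ρ₂, ‖deriv u r - (((m + 1/2) / r : ℝ) : ℂ) * u r‖ ^ 2)
      = (∫ r in ρ₁..ρ₂, ‖deriv u r - ((1 / (2 * r) : ℝ) : ℂ) * u r‖ ^ 2)
        + ∫ r in ρ₁..ρ₂, ‖((m / r : ℝ) : ℂ) * u r‖ ^ 2 := by
  have hud : ∀ r : ℝ, HasDerivAt u (deriv u r) r :=
    fun r => (hu.differentiable one_ne_zero r).hasDerivAt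
  have hcd : Continuous (deriv u) := hu.continuous_deriv le_rfl
  have hcu : Continuous u := hu.continuous
  have huIcc : uIcc ρ₁ ρ₂ = Icc ρ₁ ρ₂ := uIcc_of_le hρ.le
  have hpos : ∀ r ∈ uIcc ρ₁ ρ₂, (0:ℝ) < r := by
    rw [huIcc]; exact fun r hr => lt_of_lt_of_le hρ₁ hr.1
  have hne : ∀ r ∈ uIcc ρ₁ ρ₂, r ≠ 0 := fun r hr => (hpos r hr).ne'
  have hcre : Continuous fun r => (u r).re := Complex.continuous_re.comp hcu
  have hcim : Continuous fun r => (u r).im := Complex.continuous_im.comp hcu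
  have hcdre : Continuous fun r => (deriv u r).re := Complex.continuous_re.comp hcd
  have hcdim : Continuous fun r => (deriv u r).im := Complex.continuous_im.comp hcd
  set G : ℝ → ℝ := fun r =>
    2 * m / r * ((u r).re * (deriv u r).re + (u r).im * (deriv u r).im)
      - m / r ^ 2 * ((u r).re ^ 2 + (u r).im ^ 2) with hG
  set F : ℝ → ℝ := fun r => m / r * ((u r).re ^ 2 + (u r).im ^ 2) with hF
  -- derivative of F is G on positive r
  have hFG : ∀ r ∈ uIcc ρ₁ ρ₂, HasDerivAt F (G r) r := by
    intro r hr
    have hr0 : r ≠ 0 := hne r hr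
    have hre : HasDerivAt (fun s => (u s).re) ((deriv u r).re) r := by
      exact (Complex.reCLM.hasFDerivAt.comp_hasDerivAt r (hud r))
    have him : HasDerivAt (fun s => (u s).im) ((deriv u r).im) r := by
      exact (Complex.imCLM.hasFDerivAt.comp_hasDerivAt r (hud r))
    have h2 : HasDerivAt (fun s => (u s).re ^ 2 + (u s).im ^ 2)
        (2 * (u r).re * (deriv u r).re + 2 * (u r).im * (deriv u r).im) r := by
      have := (hre.pow 2).add (him.pow 2)
      exact this.congr_deriv (by ring)
    have h1 : HasDerivAt (fun s => m / s) (-(m / r ^ 2)) r := by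
      simpa [div_eq_mul_inv, mul_comm, sq] using (hasDerivAt_inv hr0).const_mul m
    have := h1.mul h2
    refine this.congr_deriv ?_
    simp only [hG]
    field_simp
    ring
  have hGcont : ContinuousOn G (uIcc ρ₁ ρ₂) := by
    apply ContinuousOn.sub
    · exact (continuousOn_const.div continuousOn_id hne).mul
        ((hcre.mul hcdre).add (hcim.mul hcdim)).continuousOn
    · refine (continuousOn_const.div ?_ ?_).mul
        (((hcre.pow 2).add (hcim.pow 2)).continuousOn)
      · exact (continuous_pow 2).continuousOn
      · exact fun r hr => pow_ne_zero 2 (hne r hr)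
  have hGint : IntervalIntegrable G MeasureTheory.volume ρ₁ ρ₂ :=
    hGcont.intervalIntegrable
  have hGval : ∫ r in ρ₁..ρ₂, G r = 0 := by
    rw [intervalIntegral.integral_eq_sub_of_hasDerivAt hFG hGint]
    simp [hF, hu₁, hu₂]
  -- continuity of integrands
  have hint : ∀ c : ℝ, IntervalIntegrable
      (fun r => ‖deriv u r - ((c / r : ℝ) : ℂ) * u r‖ ^ 2)
      MeasureTheory.volume ρ₁ ρ₂ := by
    intro c
    apply ContinuousOn.intervalIntegrable
    apply ContinuousOn.pow
    apply ContinuousOn.norm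
    exact hcd.continuousOn.sub
      ((Complex.continuous_ofReal.comp_continuousOn
        (continuousOn_const.div continuousOn_id hne)).mul hcu.continuousOn)
  have hint2 : IntervalIntegrable
      (fun r => ‖deriv u r - ((1 / (2 * r) : ℝ) : ℂ) * u r‖ ^ 2)
      MeasureTheory.volume ρ₁ ρ₂ := by
    apply ContinuousOn.intervalIntegrable
    apply ContinuousOn.pow
    apply ContinuousOn.norm
    refine hcd.continuousOn.sub
      ((Complex.continuous_ofReal.comp_continuousOn
        (continuousOn_const.div ?_ ?_)).mul hcu.continuousOn)
    · exact (continuous_const.mul continuous_id).continuousOn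
    · exact fun r hr => mul_ne_zero two_ne_zero (hne r hr)
  have hint3 : IntervalIntegrable
      (fun r => ‖((m / r : ℝ) : ℂ) * u r‖ ^ 2) MeasureTheory.volume ρ₁ ρ₂ := by
    apply ContinuousOn.intervalIntegrable
    apply ContinuousOn.pow
    apply ContinuousOn.norm
    exact (Complex.continuous_ofReal.comp_continuousOn
        (continuousOn_const.div continuousOn_id hne)).mul hcu.continuousOn
  -- pointwise identity
  have hEq : EqOn (fun r => ‖deriv u r - (((m + 1/2) / r : ℝ) : ℂ) * u r‖ ^ 2)
      (fun r => ‖deriv u r - ((1 / (2 * r) : ℝ) : ℂ) * u r‖ ^ 2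
        + ‖((m / r : ℝ) : ℂ) * u r‖ ^ 2 - G r) (uIcc ρ₁ ρ₂) := by
    intro r hr
    have hr0 : r ≠ 0 := hne r hr
    simp only [norm_sub_real_mul_sq, norm_real_mul_sq, hG]
    field_simp
    ring
  calc (∫ r in ρ₁..ρ₂, ‖deriv u r - (((m + 1/2) / r : ℝ) : ℂ) * u r‖ ^ 2)
      = ∫ r in ρ₁..ρ₂, (‖deriv u r - ((1 / (2 * r) : ℝ) : ℂ) * u r‖ ^ 2
        + ‖((m / r : ℝ) : ℂ) * u r‖ ^ 2 - G r) := intervalIntegral.integral_congr hEq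
    _ = (∫ r in ρ₁..ρ₂, (‖deriv u r - ((1 / (2 * r) : ℝ) : ℂ) * u r‖ ^ 2
        + ‖((m / r : ℝ) : ℂ) * u r‖ ^ 2)) - ∫ r in ρ₁..ρ₂, G r :=
      intervalIntegral.integral_sub (hint2.add hint3) hGint
    _ = _ := by rw [hGval, intervalIntegral.integral_add hint2 hint3]; ring
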